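/- Suppose condition (★) holds. Let A be the quotient of the free algebra on generators X_1, …, X_n, Y (i.e. FreeAlgebra 𝕜 (Fin n ⊕ Unit)) by the two-sided ideal generated by all elements X_i * X_j + μ i j • (X_j * X_i) − (2 * B i j) • Y for i, j ∈ Fin n, together with the elements Y * X_i − X_i * Y for all i. Then the image of Y in A is a regular element, i.e. it is neither a left nor a right zero divisor. (Section 5: since gr(R) ≅ Λ_μ(V), y is a regular element of the homogenization A.) -/

import Mathlib

open FreeAlgebra

/-- `μ` is multiplicatively antisymmetric: `μ i j * μ j i = 1` and `μ i i = 1`. -/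
def MulAntisym {𝕜 : Type*} [Field 𝕜] {n : ℕ} (μ : Fin n → Fin n → 𝕜) : Prop :=
  ∀ i j, μ i j * μ j i = 1 ∧ μ i i = 1

/-- `B` is `μ`-symmetric: `B i j = μ i j * B j i`. -/
def MuSymm {𝕜 : Type*} [Field 𝕜] {n : ℕ} (μ B : Fin n → Fin n → 𝕜) : Prop :=
  ∀ i j, B i j = μ i j * B j i

/-- Condition (★): for all `i, j` with `B i j ≠ 0`, one has `μ i k = μ k j` for all `k`. -/
def StarCond {𝕜 : Type*} [Field 𝕜] {n : ℕ} (μ B : Fin n → Fin n → 𝕜) : Prop :=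
  ∀ i j, B i j ≠ 0 → ∀ k, μ i k = μ k j

/-- The defining relations of the skew Clifford algebra: identifying
`x_i x_j + μ i j • (x_j x_i)` with `(2 * B i j) • 1`, which amounts to quotienting the free
algebra by the two-sided ideal generated by
`x_i x_j + μ i j • (x_j x_i) - (2 * B i j) • 1`. -/
inductive sClRel (𝕜 : Type*) [Field 𝕜] (n : ℕ) (μ B : Fin n → Fin n → 𝕜) :
    FreeAlgebra 𝕜 (Fin n) → FreeAlgebra 𝕜 (Fin n) → Prop
  | rel (i j : Fin n) : sClRel 𝕜 n μ B
      (ι 𝕜 i * ι 𝕜 j + μ i j • (ι 𝕜 j * ι 𝕜 i))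
      ((2 * B i j) • (1 : FreeAlgebra 𝕜 (Fin n)))

/-- The skew Clifford algebra `sCl(μ, B)`. -/
abbrev sCl (𝕜 : Type*) [Field 𝕜] (n : ℕ) (μ B : Fin n → Fin n → 𝕜) : Type _ :=
  RingQuot (sClRel 𝕜 n μ B)

/-- The image `x̄_i` of the generator `x_i` in the skew Clifford algebra. -/
noncomputable def sClGen (𝕜 : Type*) [Field 𝕜] (n : ℕ) (μ B : Fin n → Fin n → 𝕜)
    (i : Fin n) : sCl 𝕜 n μ B :=
  RingQuot.mkAlgHom 𝕜 (sClRel 𝕜 n μ B) (ι 𝕜 i)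
/-- The defining relations of the homogenization `A` of `sCl(μ, B)`: the quadratic
relations `X_i X_j + μ i j • (X_j X_i) = (2 * B i j) • Y`, together with relations making
`Y` central. -/
inductive HomogRel (𝕜 : Type*) [Field 𝕜] (n : ℕ) (μ B : Fin n → Fin n → 𝕜) :
    FreeAlgebra 𝕜 (Fin n ⊕ Unit) → FreeAlgebra 𝕜 (Fin n ⊕ Unit) → Prop
  | rel (i j : Fin n) : HomogRel 𝕜 n μ B
      (ι 𝕜 (Sum.inl i) * ι 𝕜 (Sum.inl j) + μ i j • (ι 𝕜 (Sum.inl j) * ι 𝕜 (Sum.inl i)))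
      ((2 * B i j) • ι 𝕜 (Sum.inr ()))
  | central (i : Fin n) : HomogRel 𝕜 n μ B
      (ι 𝕜 (Sum.inr ()) * ι 𝕜 (Sum.inl i)) (ι 𝕜 (Sum.inl i) * ι 𝕜 (Sum.inr ()))

namespace HomogY

variable {𝕜 : Type*} [Field 𝕜] {n : ℕ}

abbrev MM (𝕜 : Type*) [Field 𝕜] (n : ℕ) := (Finset (Fin n) × ℕ) →₀ 𝕜

noncomputable def bas (S : Finset (Fin n)) (m : ℕ) : MM 𝕜 n := Finsupp.single (S, m) 1

noncomputable def Pins (k : Fin n) : MM 𝕜 n →ₗ[𝕜] MM 𝕜 n :=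
  Finsupp.lmapDomain 𝕜 𝕜 (fun p => (insert k p.1, p.2))

noncomputable def Yct : MM 𝕜 n →ₗ[𝕜] MM 𝕜 n :=
  Finsupp.lmapDomain 𝕜 𝕜 (fun p => (p.1, p.2 + 1))

variable (μ B : Fin n → Fin n → 𝕜)

noncomputable def raw (i : Fin n) : List (Fin n) → ℕ → MM 𝕜 n
  | [], m => bas {i} m
  | k :: L, m =>
    if i < k then bas (insert i (insert k L.toFinset)) m
    else if i = k then (B i i) • bas L.toFinset (m + 1)
    else (-(μ i k)) • Pins k (raw i L m) + (2 * B i k) • bas L.toFinset (m + 1)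

noncomputable def Xct (i : Fin n) : MM 𝕜 n →ₗ[𝕜] MM 𝕜 n :=
  Finsupp.lift (MM 𝕜 n) 𝕜 _ (fun p => raw μ B i (p.1.sort (· ≤ ·)) p.2)

@[simp] lemma Pins_bas (k : Fin n) (S : Finset (Fin n)) (m : ℕ) :
    Pins k (bas S m : MM 𝕜 n) = bas (insert k S) m := by
  simp [Pins, bas, Finsupp.lmapDomain_apply, Finsupp.mapDomain_single]

@[simp] lemma Yct_bas (S : Finset (Fin n)) (m : ℕ) :
    Yct (bas S m : MM 𝕜 n) = bas S (m + 1) := by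
  simp [Yct, bas, Finsupp.lmapDomain_apply, Finsupp.mapDomain_single]

@[simp] lemma Xct_bas (i : Fin n) (S : Finset (Fin n)) (m : ℕ) :
    Xct μ B i (bas S m) = raw μ B i (S.sort (· ≤ ·)) m := by
  simp [Xct, bas, Finsupp.lift_apply, Finsupp.sum_single_index]

lemma Yct_Pins (k : Fin n) (v : MM 𝕜 n) : Yct (Pins k v) = Pins k (Yct v) := by
  have : (Yct ∘ₗ Pins k : MM 𝕜 n →ₗ[𝕜] MM 𝕜 n) = Pins k ∘ₗ Yct := by
    refine Finsupp.lhom_ext fun p c => ?_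
    simp [Pins, Yct, Finsupp.lmapDomain_apply, Finsupp.mapDomain_single]
  exact LinearMap.congr_fun this v

lemma raw_Y (i : Fin n) (L : List (Fin n)) (m : ℕ) :
    raw μ B i L (m + 1) = Yct (raw μ B i L m) := by
  induction L with
  | nil => simp [raw]
  | cons k L ih =>
    by_cases h1 : i < k
    · simp [raw, h1]
    · by_cases h2 : i = k
      · simp [raw, h1, h2]
      · simp only [raw, if_neg h1, if_neg h2, map_add, map_smul, Yct_bas, ih]
        congr 1
        rw [Yct_Pins]

lemma Yct_Xct (i : Fin n) :
    (Yct ∘ₗ Xct μ B i : MM 𝕜 n →ₗ[𝕜] MM 𝕜 n) = Xct μ B i ∘ₗ Yct := by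
  refine Finsupp.lhom_ext fun p c => ?_
  have : (Finsupp.single p c : MM 𝕜 n) = c • bas p.1 p.2 := by
    simp [bas, Finsupp.smul_single]
  simp only [this, map_smul, LinearMap.comp_apply, Yct_bas, Xct_bas, raw_Y]

lemma sort_insert_of_gt {k : Fin n} {T : Finset (Fin n)} (h : ∀ x ∈ T, k < x) :
    (insert k T).sort (· ≤ ·) = k :: T.sort (· ≤ ·) :=
  Finset.sort_insert (· ≤ ·) (fun b hb => (h b hb).le) (fun hk => lt_irrefl k (h k hk))

lemma Xct_bas_insert_lt {i k : Fin n} (hik : i < k) {T : Finset (Fin n)}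
    (h : ∀ x ∈ T, k < x) (m : ℕ) :
    Xct μ B i (bas (insert k T) m) = bas (insert i (insert k T)) m := by
  rw [Xct_bas, sort_insert_of_gt h]
  simp [raw, hik, Finset.sort_toFinset]

lemma Xct_bas_insert_self {k : Fin n} {T : Finset (Fin n)}
    (h : ∀ x ∈ T, k < x) (m : ℕ) :
    Xct μ B k (bas (insert k T) m) = (B k k) • bas T (m + 1) := by
  rw [Xct_bas, sort_insert_of_gt h]
  simp [raw, Finset.sort_toFinset]

lemma Xct_bas_insert_gt {i k : Fin n} (hki : k < i) {T : Finset (Fin n)}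
    (h : ∀ x ∈ T, k < x) (m : ℕ) :
    Xct μ B i (bas (insert k T) m)
      = (-(μ i k)) • Pins k (Xct μ B i (bas T m)) + (2 * B i k) • bas T (m + 1) := by
  rw [Xct_bas, sort_insert_of_gt h, Xct_bas]
  simp [raw, not_lt.mpr hki.le, hki.ne', Finset.sort_toFinset]

lemma Xct_bas_of_gt {i : Fin n} {T : Finset (Fin n)} (h : ∀ x ∈ T, i < x) (m : ℕ) :
    Xct μ B i (bas T m) = bas (insert i T) m := by
  rw [Xct_bas]
  rcases e : T.sort (· ≤ ·) with _ | ⟨k, L⟩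
  · have hT := Finset.sort_toFinset (α := Fin n) T (· ≤ ·)
    rw [e] at hT
    simp only [List.toFinset_nil] at hT
    simp [raw, ← hT]
  · have hT := Finset.sort_toFinset (α := Fin n) T (· ≤ ·)
    rw [e] at hT
    simp only [List.toFinset_cons] at hT
    have hk : i < k := h k (by rw [← hT]; exact Finset.mem_insert_self _ _)
    simp [raw, hk, hT]

def Gt (k : Fin n) : Set (Finset (Fin n) × ℕ) := {p | ∀ x ∈ p.1, k < x}

lemma bas_mem {k : Fin n} {T : Finset (Fin n)} (h : ∀ x ∈ T, k < x) (m : ℕ) :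
    (bas T m : MM 𝕜 n) ∈ Finsupp.supported 𝕜 𝕜 (Gt k) :=
  Finsupp.single_mem_supported 𝕜 1 h

lemma Pins_mem {k k' : Fin n} (hkk : k < k') {w : MM 𝕜 n}
    (hw : w ∈ Finsupp.supported 𝕜 𝕜 (Gt k)) :
    Pins k' w ∈ Finsupp.supported 𝕜 𝕜 (Gt k) := by
  rw [Finsupp.mem_supported] at hw ⊢
  intro p hp
  have : p ∈ (w.support.image (fun q => (insert k' q.1, q.2)) : Finset _) := by
    refine Finset.mem_of_subset ?_ hp
    classical
    exact Finsupp.mapDomain_support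
  obtain ⟨q, hq, rfl⟩ := Finset.mem_image.mp this
  intro x hx
  rcases Finset.mem_insert.mp hx with rfl | hx
  · exact hkk
  · exact hw hq x hx

lemma Yct_mem {k : Fin n} {w : MM 𝕜 n}
    (hw : w ∈ Finsupp.supported 𝕜 𝕜 (Gt k)) :
    Yct w ∈ Finsupp.supported 𝕜 𝕜 (Gt k) := by
  rw [Finsupp.mem_supported] at hw ⊢
  intro p hp
  have : p ∈ (w.support.image (fun q => (q.1, q.2 + 1)) : Finset _) := by
    refine Finset.mem_of_subset ?_ hp
    classical
    exact Finsupp.mapDomain_support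
  obtain ⟨q, hq, rfl⟩ := Finset.mem_image.mp this
  exact fun x hx => hw hq x hx

lemma raw_mem {k i : Fin n} (hki : k < i) {L : List (Fin n)}
    (hL : ∀ x ∈ L, k < x) (m : ℕ) :
    raw μ B i L m ∈ Finsupp.supported 𝕜 𝕜 (Gt k) := by
  induction L generalizing m with
  | nil =>
    refine bas_mem (fun x hx => ?_) m
    rw [Finset.mem_singleton] at hx
    exact hx ▸ hki
  | cons j L ih =>
    have hj : k < j := hL j List.mem_cons_self
    have hL' : ∀ x ∈ L, k < x := fun x hx => hL x (List.mem_cons_of_mem _ hx)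
    have htf : ∀ x ∈ L.toFinset, k < x := fun x hx => hL' x (List.mem_toFinset.mp hx)
    by_cases h1 : i < j
    · rw [raw, if_pos h1]
      refine bas_mem (fun x hx => ?_) m
      rcases Finset.mem_insert.mp hx with rfl | hx
      · exact hki
      · rcases Finset.mem_insert.mp hx with rfl | hx
        · exact hj
        · exact htf x hx
    · by_cases h2 : i = j
      · rw [raw, if_neg h1, if_pos h2]
        exact Submodule.smul_mem _ _ (bas_mem htf _)
      · rw [raw, if_neg h1, if_neg h2]
        exact Submodule.add_mem _
          (Submodule.smul_mem _ _ (Pins_mem hj (ih hL' m)))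
          (Submodule.smul_mem _ _ (bas_mem htf _))

lemma Xct_mem {k i : Fin n} (hki : k < i) {w : MM 𝕜 n}
    (hw : w ∈ Finsupp.supported 𝕜 𝕜 (Gt k)) :
    Xct μ B i w ∈ Finsupp.supported 𝕜 𝕜 (Gt k) := by
  rw [Finsupp.supported_eq_span_single] at hw
  induction hw using Submodule.span_induction with
  | mem x hx =>
    obtain ⟨p, hp, rfl⟩ := hx
    show Xct μ B i (bas p.1 p.2) ∈ _
    rw [Xct_bas]
    exact raw_mem μ B hki (fun x hx => hp x (Finset.mem_sort (· ≤ ·) |>.mp hx)) _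
  | zero => simp only [map_zero]; exact Submodule.zero_mem _
  | add x y _ _ hx hy => rw [map_add]; exact Submodule.add_mem _ hx hy
  | smul c x _ hx => rw [map_smul]; exact Submodule.smul_mem _ _ hx

lemma eq_on_supported {N : Type*} [AddCommMonoid N] [Module 𝕜 N]
    {k : Fin n} {f g : MM 𝕜 n →ₗ[𝕜] N}
    (h : ∀ p : Finset (Fin n) × ℕ, p ∈ Gt k → f (bas p.1 p.2) = g (bas p.1 p.2)) :
    ∀ w ∈ Finsupp.supported 𝕜 𝕜 (Gt k), f w = g w := by
  intro w hw
  rw [Finsupp.supported_eq_span_single] at hw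
  induction hw using Submodule.span_induction with
  | mem x hx => obtain ⟨p, hp, rfl⟩ := hx; exact h p hp
  | zero => simp
  | add x y _ _ hx hy => simp [map_add, hx, hy]
  | smul c x _ hx => simp [map_smul, hx]

lemma D1 {i k : Fin n} (hik : i < k) {w : MM 𝕜 n}
    (hw : w ∈ Finsupp.supported 𝕜 𝕜 (Gt k)) :
    Xct μ B i (Pins k w) = Pins i (Pins k w) := by
  refine eq_on_supported (f := Xct μ B i ∘ₗ Pins k) (g := Pins i ∘ₗ Pins k) ?_ w hw
  intro p hp
  simp only [LinearMap.comp_apply, Pins_bas]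
  rw [Xct_bas_insert_lt μ B hik hp]

lemma D2 {k : Fin n} {w : MM 𝕜 n}
    (hw : w ∈ Finsupp.supported 𝕜 𝕜 (Gt k)) :
    Xct μ B k (Pins k w) = (B k k) • Yct w := by
  refine eq_on_supported (f := Xct μ B k ∘ₗ Pins k) (g := (B k k) • Yct) ?_ w hw
  intro p hp
  simp only [LinearMap.comp_apply, Pins_bas, LinearMap.smul_apply, Yct_bas]
  rw [Xct_bas_insert_self μ B hp]

lemma D3 {i k : Fin n} (hki : k < i) {w : MM 𝕜 n}
    (hw : w ∈ Finsupp.supported 𝕜 𝕜 (Gt k)) :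
    Xct μ B i (Pins k w) = (-(μ i k)) • Pins k (Xct μ B i w) + (2 * B i k) • Yct w := by
  refine eq_on_supported (f := Xct μ B i ∘ₗ Pins k)
    (g := (-(μ i k)) • (Pins k ∘ₗ Xct μ B i) + (2 * B i k) • Yct) ?_ w hw
  intro p hp
  simp only [LinearMap.comp_apply, Pins_bas, LinearMap.add_apply, LinearMap.smul_apply, Yct_bas]
  rw [Xct_bas_insert_gt μ B hki hp]

lemma Elem {i : Fin n} {w : MM 𝕜 n}
    (hw : w ∈ Finsupp.supported 𝕜 𝕜 (Gt i)) :
    Xct μ B i w = Pins i w := by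
  refine eq_on_supported (f := Xct μ B i) (g := Pins i) ?_ w hw
  intro p hp
  rw [Pins_bas, Xct_bas_of_gt μ B hp]

lemma Yct_Xct' (i : Fin n) (v : MM 𝕜 n) :
    Yct (Xct μ B i v) = Xct μ B i (Yct v) :=
  LinearMap.congr_fun (Yct_Xct μ B i) v

lemma fact1 (hμ : MulAntisym μ) (hstar : StarCond μ B) (i j k : Fin n) :
    B i j * (μ i k * μ j k) = B i j := by
  by_cases h : B i j = 0
  · simp [h]
  · rw [hstar i j h k, mul_comm (μ k j) (μ j k), (hμ j k).1, mul_one]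

lemma fact2 (hμ : MulAntisym μ) (hstar : StarCond μ B) (i j k : Fin n) :
    B j k * (μ i j * μ i k) = B j k := by
  by_cases h : B j k = 0
  · simp [h]
  · rw [← hstar j k h i, (hμ i j).1, mul_one]

lemma fact3 (hstar : StarCond μ B) (i j k : Fin n) :
    B i k * μ i j = B i k * μ j k := by
  by_cases h : B i k = 0
  · simp [h]
  · rw [hstar i k h j]

lemma factE (hstar : StarCond μ B) (j k : Fin n) :
    B k k * μ k j = B k k * μ j k := by
  by_cases h : B k k = 0
  · simp [h]
  · rw [hstar k k h j]

lemma factBsymm (hμ : MulAntisym μ) (hB : MuSymm μ B) (hstar : StarCond μ B) (j k : Fin n) :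
    B j k = B k j := by
  by_cases h : B k j = 0
  · rw [hB j k, h, mul_zero]
  · have h1 : μ k j = 1 := by
      have := hstar k j h k
      rw [(hμ k k).2] at this
      exact this.symm
    have h2 : μ j k = 1 := by
      have := (hμ j k).1
      rw [h1, mul_one] at this
      exact this
    rw [hB j k, h2, one_mul]

lemma mainRel_swap (hμ : MulAntisym μ) (hB : MuSymm μ B) {i j : Fin n} {v r : MM 𝕜 n}
    (h : Xct μ B j (Xct μ B i v) + μ j i • Xct μ B i (Xct μ B j v) = (2 * B j i) • r) :
    Xct μ B i (Xct μ B j v) + μ i j • Xct μ B j (Xct μ B i v) = (2 * B i j) • r := by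
  have h2 := congrArg (fun z => μ i j • z) h
  simp only [smul_add, smul_smul] at h2
  rw [(hμ i j).1, one_smul, add_comm] at h2
  rw [h2]
  congr 1
  rw [hB i j]
  ring

lemma mainRel (hμ : MulAntisym μ) (hB : MuSymm μ B) (hstar : StarCond μ B) :
    ∀ (L : List (Fin n)), L.Pairwise (· < ·) → ∀ (i j : Fin n) (m : ℕ),
      Xct μ B i (Xct μ B j (bas L.toFinset m))
        + μ i j • Xct μ B j (Xct μ B i (bas L.toFinset m))
        = (2 * B i j) • bas L.toFinset (m + 1) := by
  intro L
  induction L with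
  | nil =>
    intro _ i j m
    simp only [List.toFinset_nil]
    suffices H : ∀ i j : Fin n, i ≤ j →
        Xct μ B i (Xct μ B j (bas (∅ : Finset (Fin n)) m))
          + μ i j • Xct μ B j (Xct μ B i (bas ∅ m)) = (2 * B i j) • bas ∅ (m + 1) by
      rcases le_total i j with hij | hji
      · exact H i j hij
      · exact mainRel_swap μ B hμ hB (H j i hji)
    clear i j
    intro i j hij
    have hvE : ∀ (c : Fin n) (m' : ℕ),
        Xct μ B c (bas (∅ : Finset (Fin n)) m') = bas {c} m' := by
      intro c m'
      rw [Xct_bas_of_gt μ B (by simp) m']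
      simp
    rcases eq_or_lt_of_le hij with rfl | hij'
    · rw [hvE]
      have e2 : ({i} : Finset (Fin n)) = insert i ∅ := by simp
      rw [e2, Xct_bas_insert_self μ B (by simp) m]
      rw [(hμ i i).2, one_smul]
      match_scalars
      ring
    · rw [hvE, hvE]
      have e1 : ({j} : Finset (Fin n)) = insert j ∅ := by simp
      have e2 : ({i} : Finset (Fin n)) = insert i ∅ := by simp
      rw [e1, Xct_bas_insert_lt μ B hij' (by simp) m]
      rw [e2, Xct_bas_insert_gt μ B hij' (by simp) m]
      rw [hvE, Pins_bas]
      rw [show (insert i {j} : Finset (Fin n)) = insert i (insert j ∅) by simp]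
      match_scalars
      · linear_combination (-1 : 𝕜) * (hμ i j).1
      · linear_combination (-2 : 𝕜) * hB i j
  | cons k L ih =>
    intro hkL i j m
    have hLs : L.Pairwise (· < ·) := hkL.of_cons
    have hkall : ∀ x ∈ L, k < x := fun x hx => List.rel_of_pairwise_cons hkL hx
    have hT : ∀ x ∈ L.toFinset, k < x := fun x hx => hkall x (List.mem_toFinset.mp hx)
    have hTF : (k :: L).toFinset = insert k L.toFinset := by simp
    rw [hTF]
    suffices H : ∀ i j : Fin n, i ≤ j →
        Xct μ B i (Xct μ B j (bas (insert k L.toFinset) m))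
          + μ i j • Xct μ B j (Xct μ B i (bas (insert k L.toFinset) m))
          = (2 * B i j) • bas (insert k L.toFinset) (m + 1) by
      rcases le_total i j with hij | hji
      · exact H i j hij
      · exact mainRel_swap μ B hμ hB (H j i hji)
    clear i j
    intro i j hij
    rcases lt_trichotomy j k with hjk | heqjk | hkj
    · -- case A : i ≤ j < k
      have hik : i < k := lt_of_le_of_lt hij hjk
      have hins : ∀ x ∈ insert k L.toFinset, j < x := by
        intro x hx
        rcases Finset.mem_insert.mp hx with rfl | hx
        · exact hjk
        · exact hjk.trans (hT x hx)
      have hins_i : ∀ x ∈ insert k L.toFinset, i < x :=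
        fun x hx => lt_of_le_of_lt hij (hins x hx)
      rw [Xct_bas_insert_lt μ B hjk hT m]
      rw [Xct_bas_insert_lt μ B hik hT m]
      rcases eq_or_lt_of_le hij with rfl | hij'
      · rw [Xct_bas_insert_self μ B hins m]
        rw [(hμ i i).2, one_smul]
        match_scalars
        ring
      · rw [Xct_bas_insert_lt μ B hij' hins m]
        rw [Xct_bas_insert_gt μ B hij' hins_i m]
        rw [Xct_bas_insert_lt μ B hjk hT m, Pins_bas]
        match_scalars
        · linear_combination (-1 : 𝕜) * (hμ i j).1
        · linear_combination (-2 : 𝕜) * hB i j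
    · -- case B/C : j = k
      have hkj' := heqjk.symm
      subst hkj'
      rcases eq_or_lt_of_le hij with heqij | hik
      · -- i = j = k
        have h2 := heqij.symm
        subst h2
        rw [Xct_bas_insert_self μ B hT m]
        rw [map_smul, Xct_bas_of_gt μ B hT (m + 1)]
        rw [(hμ k k).2, one_smul]
        match_scalars
        ring
      · -- i < k = j
        have hins_i : ∀ x ∈ insert k L.toFinset, i < x := by
          intro x hx
          rcases Finset.mem_insert.mp hx with rfl | hx
          · exact hik
          · exact hik.trans (hT x hx)
        rw [Xct_bas_insert_self μ B hT m]
        rw [map_smul, Xct_bas_of_gt μ B (fun x hx => hik.trans (hT x hx)) (m + 1)]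
        rw [Xct_bas_insert_lt μ B hik hT m]
        rw [Xct_bas_insert_gt μ B hik hins_i m]
        rw [Xct_bas_insert_self μ B hT m]
        rw [map_smul, Pins_bas]
        match_scalars
        · linear_combination (-(B k k)) * (hμ i k).1
        · linear_combination (-2 : 𝕜) * hB i k
    · -- j > k
      rcases lt_trichotomy i k with hik | heqik | hki
      · -- case D : i < k < j
        have hij' : i < j := hik.trans hkj
        have hins_i : ∀ x ∈ insert k L.toFinset, i < x := by
          intro x hx
          rcases Finset.mem_insert.mp hx with rfl | hx
          · exact hik
          · exact hik.trans (hT x hx)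
        rw [Xct_bas_insert_gt μ B hkj hT m]
        rw [map_add, map_smul, map_smul]
        rw [D1 μ B hik (Xct_mem μ B hkj (bas_mem hT m))]
        rw [Xct_bas_of_gt μ B (fun x hx => hik.trans (hT x hx)) (m + 1)]
        rw [Xct_bas_insert_lt μ B hik hT m]
        rw [Xct_bas_insert_gt μ B hij' hins_i m]
        rw [Xct_bas_insert_gt μ B hkj hT m]
        rw [map_add, map_smul, map_smul, Pins_bas]
        match_scalars
        · linear_combination (μ j k) * (hμ i j).1
        · linear_combination (-2 * B j k) * (hμ i j).1
        · linear_combination (-2 : 𝕜) * hB i j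
      · -- case E : i = k < j
        have h2 := heqik.symm
        subst h2
        rw [Xct_bas_insert_gt μ B hkj hT m]
        rw [map_add, map_smul, map_smul]
        rw [D2 μ B (Xct_mem μ B hkj (bas_mem hT m))]
        rw [Xct_bas_of_gt μ B hT (m + 1)]
        rw [Xct_bas_insert_self μ B hT m]
        rw [map_smul]
        rw [Yct_Xct' μ B j, Yct_bas]
        match_scalars
        · linear_combination factE μ B hstar j k
        · linear_combination (2 : 𝕜) * factBsymm μ B hμ hB hstar j k
      · -- case F : k < i ≤ j
        have hIH := ih hLs i j m
        have eYX : ∀ c : Fin n, Xct μ B c (bas L.toFinset (m + 1))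
            = Yct (Xct μ B c (bas L.toFinset m)) := by
          intro c
          rw [Yct_Xct' μ B c, Yct_bas]
        rw [Xct_bas_insert_gt μ B hkj hT m]
        rw [map_add, map_smul, map_smul]
        rw [D3 μ B hki (Xct_mem μ B hkj (bas_mem hT m))]
        rw [eYX i]
        rw [Xct_bas_insert_gt μ B hki hT m]
        rw [map_add, map_smul, map_smul]
        rw [D3 μ B (hki.trans_le hij) (Xct_mem μ B hki (bas_mem hT m))]
        rw [eYX j]
        have hP : Pins k (Xct μ B i (Xct μ B j (bas L.toFinset m)))
            = (2 * B i j) • bas (insert k L.toFinset) (m + 1)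
              - μ i j • Pins k (Xct μ B j (Xct μ B i (bas L.toFinset m))) := by
          have h3 := congrArg (Pins k) hIH
          simp only [map_add, map_smul, Pins_bas] at h3
          exact eq_sub_of_add_eq h3
        rw [hP]
        match_scalars
        · linear_combination (2 : 𝕜) * fact1 μ B hμ hstar i j k
        · ring
        · linear_combination (2 : 𝕜) * fact3 μ B hstar i j k
        · linear_combination (-2 : 𝕜) * fact2 μ B hμ hstar i j k

noncomputable def Xb (i : Fin n) : RingQuot (HomogRel 𝕜 n μ B) :=
  RingQuot.mkAlgHom 𝕜 (HomogRel 𝕜 n μ B) (ι 𝕜 (Sum.inl i))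

noncomputable def Yb : RingQuot (HomogRel 𝕜 n μ B) :=
  RingQuot.mkAlgHom 𝕜 (HomogRel 𝕜 n μ B) (ι 𝕜 (Sum.inr ()))

lemma relA (i j : Fin n) :
    Xb μ B i * Xb μ B j + μ i j • (Xb μ B j * Xb μ B i) = (2 * B i j) • Yb μ B := by
  have h := RingQuot.mkAlgHom_rel 𝕜 (HomogRel.rel (𝕜 := 𝕜) (μ := μ) (B := B) i j)
  simpa only [map_add, map_mul, map_smul, Xb, Yb] using h

lemma relC (i : Fin n) : Yb μ B * Xb μ B i = Xb μ B i * Yb μ B := by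
  have h := RingQuot.mkAlgHom_rel 𝕜 (HomogRel.central (𝕜 := 𝕜) (μ := μ) (B := B) i)
  simpa only [map_mul, Xb, Yb] using h

lemma sqA (hchar : (2 : 𝕜) ≠ 0) (hμ : MulAntisym μ) (i : Fin n) :
    Xb μ B i * Xb μ B i = B i i • Yb μ B := by
  have h := relA μ B i i
  rw [(hμ i i).2, one_smul] at h
  have h2 : (2 : 𝕜) • (Xb μ B i * Xb μ B i) = (2 : 𝕜) • (B i i • Yb μ B) := by
    rw [two_smul, h, smul_smul]
  exact smul_right_injective _ hchar h2

noncomputable def ΨL (L : List (Fin n)) (m : ℕ) : RingQuot (HomogRel 𝕜 n μ B) :=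
  (L.map (Xb μ B)).prod * (Yb μ B) ^ m

lemma Yb_comm_prod (L : List (Fin n)) : Commute (Yb μ B) ((L.map (Xb μ B)).prod) := by
  induction L with
  | nil => simp [Commute.one_right]
  | cons a L ih =>
    rw [List.map_cons, List.prod_cons]
    exact Commute.mul_right (relC μ B a) ih

lemma Yb_ΨL (L : List (Fin n)) (m : ℕ) : Yb μ B * ΨL μ B L m = ΨL μ B L (m + 1) := by
  rw [ΨL, ΨL, ← mul_assoc, (Yb_comm_prod μ B L).eq, mul_assoc, ← pow_succ']

lemma ΨL_cons (k : Fin n) (L : List (Fin n)) (m : ℕ) :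
    ΨL μ B (k :: L) m = Xb μ B k * ΨL μ B L m := by
  rw [ΨL, ΨL, List.map_cons, List.prod_cons, mul_assoc]

noncomputable def Ψ : MM 𝕜 n →ₗ[𝕜] RingQuot (HomogRel 𝕜 n μ B) :=
  Finsupp.lift _ 𝕜 _ (fun p => ΨL μ B (p.1.sort (· ≤ ·)) p.2)

@[simp] lemma Ψ_bas (S : Finset (Fin n)) (m : ℕ) :
    Ψ μ B (bas S m) = ΨL μ B (S.sort (· ≤ ·)) m := by
  simp [Ψ, bas, Finsupp.lift_apply, Finsupp.sum_single_index]

lemma sort_eq_of_sorted {L : List (Fin n)} (hL : L.Pairwise (· < ·)) :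
    L.toFinset.sort (· ≤ ·) = L :=
  (List.toFinset_sort (· ≤ ·) hL.nodup).mpr (hL.imp le_of_lt)

lemma Ψ_Pins (k : Fin n) {w : MM 𝕜 n} (hw : w ∈ Finsupp.supported 𝕜 𝕜 (Gt k)) :
    Ψ μ B (Pins k w) = Xb μ B k * Ψ μ B w := by
  refine eq_on_supported (f := Ψ μ B ∘ₗ Pins k)
    (g := (LinearMap.mulLeft 𝕜 (Xb μ B k)) ∘ₗ Ψ μ B) ?_ w hw
  intro p hp
  simp only [LinearMap.comp_apply, Pins_bas, LinearMap.mulLeft_apply, Ψ_bas]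
  rw [sort_insert_of_gt hp, ΨL_cons]

lemma Ψ_Yct (v : MM 𝕜 n) : Ψ μ B (Yct v) = Yb μ B * Ψ μ B v := by
  have h : (Ψ μ B ∘ₗ Yct : MM 𝕜 n →ₗ[𝕜] _)
      = (LinearMap.mulLeft 𝕜 (Yb μ B)) ∘ₗ Ψ μ B := by
    refine Finsupp.lhom_ext fun p c => ?_
    have e : (Finsupp.single p c : MM 𝕜 n) = c • bas p.1 p.2 := by
      simp [bas, Finsupp.smul_single]
    simp only [e, map_smul, LinearMap.comp_apply, Yct_bas, Ψ_bas,
      LinearMap.mulLeft_apply, Yb_ΨL]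
  exact LinearMap.congr_fun h v

lemma Ψ_raw (hchar : (2 : 𝕜) ≠ 0) (hμ : MulAntisym μ) (i : Fin n) :
    ∀ L : List (Fin n), L.Pairwise (· < ·) → ∀ m : ℕ,
      Ψ μ B (raw μ B i L m) = Xb μ B i * ΨL μ B L m := by
  intro L
  induction L with
  | nil =>
    intro _ m
    rw [raw, Ψ_bas, Finset.sort_singleton, ΨL_cons]
  | cons k L ih =>
    intro hkL m
    have hLs : L.Pairwise (· < ·) := hkL.of_cons
    have hkall : ∀ x ∈ L, k < x := fun x hx => List.rel_of_pairwise_cons hkL hx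
    have hT : ∀ x ∈ L.toFinset, k < x := fun x hx => hkall x (List.mem_toFinset.mp hx)
    have hsort : L.toFinset.sort (· ≤ ·) = L := sort_eq_of_sorted hLs
    rcases lt_trichotomy i k with hik | heq | hki
    · rw [raw, if_pos hik, Ψ_bas]
      have h1 : ∀ x ∈ insert k L.toFinset, i < x := by
        intro x hx
        rcases Finset.mem_insert.mp hx with rfl | hx
        · exact hik
        · exact hik.trans (hT x hx)
      rw [sort_insert_of_gt h1, sort_insert_of_gt hT, hsort, ΨL_cons]
    · have h2 := heq.symm
      subst h2
      rw [raw, if_neg (lt_irrefl k), if_pos rfl, map_smul, Ψ_bas, hsort]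
      rw [ΨL_cons, ← mul_assoc, sqA μ B hchar hμ, smul_mul_assoc, Yb_ΨL]
    · rw [raw, if_neg (not_lt.mpr hki.le), if_neg hki.ne', map_add, map_smul, map_smul]
      rw [Ψ_Pins μ B k (raw_mem μ B hki hkall m), ih hLs m, Ψ_bas, hsort]
      rw [ΨL_cons, ← mul_assoc, ← mul_assoc]
      have hik := relA μ B i k
      have e1 : Xb μ B i * Xb μ B k
          = (2 * B i k) • Yb μ B - μ i k • (Xb μ B k * Xb μ B i) :=
        eq_sub_of_add_eq hik
      rw [e1, sub_mul, smul_mul_assoc, smul_mul_assoc, mul_assoc, Yb_ΨL]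
      module

noncomputable def rho0 : FreeAlgebra 𝕜 (Fin n ⊕ Unit) →ₐ[𝕜] Module.End 𝕜 (MM 𝕜 n) :=
  FreeAlgebra.lift 𝕜 (Sum.elim (fun i => Xct μ B i) (fun _ => Yct))

lemma rho0_inl (i : Fin n) : rho0 μ B (ι 𝕜 (Sum.inl i)) = Xct μ B i := by
  simp [rho0]

lemma rho0_inr : rho0 μ B (ι 𝕜 (Sum.inr ())) = (Yct : MM 𝕜 n →ₗ[𝕜] MM 𝕜 n) := by
  simp [rho0]

lemma rho0_compat (hμ : MulAntisym μ) (hB : MuSymm μ B) (hstar : StarCond μ B)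
    {x y : FreeAlgebra 𝕜 (Fin n ⊕ Unit)} (h : HomogRel 𝕜 n μ B x y) :
    rho0 μ B x = rho0 μ B y := by
  cases h with
  | rel i j =>
    simp only [map_add, map_mul, map_smul, rho0_inl, rho0_inr]
    refine Finsupp.lhom_ext fun p c => ?_
    have e : (Finsupp.single p c : MM 𝕜 n) = c • bas p.1 p.2 := by
      simp [bas, Finsupp.smul_single]
    have key := mainRel μ B hμ hB hstar (p.1.sort (· ≤ ·)) (Finset.sortedLT_sort p.1).pairwise i j p.2
    rw [Finset.sort_toFinset] at key
    simp only [e, map_smul, LinearMap.add_apply, LinearMap.smul_apply,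
      Module.End.mul_apply, Yct_bas]
    rw [key]
  | central i =>
    simp only [map_mul, rho0_inl, rho0_inr]
    exact Yct_Xct μ B i

noncomputable def rho (hμ : MulAntisym μ) (hB : MuSymm μ B) (hstar : StarCond μ B) :
    RingQuot (HomogRel 𝕜 n μ B) →ₐ[𝕜] Module.End 𝕜 (MM 𝕜 n) :=
  RingQuot.liftAlgHom 𝕜 ⟨rho0 μ B, fun _ _ h => rho0_compat μ B hμ hB hstar h⟩

lemma rho_mk (hμ : MulAntisym μ) (hB : MuSymm μ B) (hstar : StarCond μ B)
    (f : FreeAlgebra 𝕜 (Fin n ⊕ Unit)) :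
    rho μ B hμ hB hstar (RingQuot.mkAlgHom 𝕜 (HomogRel 𝕜 n μ B) f) = rho0 μ B f :=
  RingQuot.liftAlgHom_mkAlgHom_apply _ _ _ _

lemma commY (f : FreeAlgebra 𝕜 (Fin n ⊕ Unit)) :
    Commute (rho0 μ B (ι 𝕜 (Sum.inr ()))) (rho0 μ B f) := by
  induction f using FreeAlgebra.induction with
  | grade0 r =>
    rw [AlgHom.commutes]
    exact Algebra.commute_algebraMap_right r _
  | grade1 x =>
    rcases x with i | u
    · rw [rho0_inl, rho0_inr]
      exact Yct_Xct μ B i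
    · cases u; exact Commute.refl _
  | mul a b ha hb => rw [map_mul]; exact ha.mul_right hb
  | add a b ha hb => rw [map_add]; exact ha.add_right hb

lemma Psi_rho0 (hchar : (2 : 𝕜) ≠ 0) (hμ : MulAntisym μ)
    (f : FreeAlgebra 𝕜 (Fin n ⊕ Unit)) :
    ∀ v : MM 𝕜 n, Ψ μ B (rho0 μ B f v)
      = RingQuot.mkAlgHom 𝕜 (HomogRel 𝕜 n μ B) f * Ψ μ B v := by
  induction f using FreeAlgebra.induction with
  | grade0 r =>
    intro v
    rw [AlgHom.commutes, AlgHom.commutes, Module.algebraMap_end_apply, map_smul,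
      Algebra.smul_def]
  | grade1 x =>
    rcases x with i | u
    · intro v
      rw [rho0_inl]
      have h : (Ψ μ B ∘ₗ Xct μ B i : MM 𝕜 n →ₗ[𝕜] _)
          = (LinearMap.mulLeft 𝕜 (Xb μ B i)) ∘ₗ Ψ μ B := by
        refine Finsupp.lhom_ext fun p c => ?_
        have e : (Finsupp.single p c : MM 𝕜 n) = c • bas p.1 p.2 := by
          simp [bas, Finsupp.smul_single]
        simp only [e, map_smul, LinearMap.comp_apply, Xct_bas, Ψ_bas,
          LinearMap.mulLeft_apply]
        rw [Ψ_raw μ B hchar hμ i (p.1.sort (· ≤ ·)) (Finset.sortedLT_sort p.1).pairwise p.2]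
      exact LinearMap.congr_fun h v
    · cases u
      intro v
      rw [rho0_inr]
      exact Ψ_Yct μ B v
  | mul a b ha hb =>
    intro v
    rw [map_mul, Module.End.mul_apply, ha, hb, map_mul, mul_assoc]
  | add a b ha hb =>
    intro v
    rw [map_add, LinearMap.add_apply, map_add, ha, hb, map_add, add_mul]

lemma Yct_inj : Function.Injective (Yct : MM 𝕜 n →ₗ[𝕜] MM 𝕜 n) := by
  have : Function.Injective (fun p : Finset (Fin n) × ℕ => (p.1, p.2 + 1)) := by
    intro p q h
    simp only [Prod.mk.injEq] at h
    exact Prod.ext h.1 (Nat.add_right_cancel h.2)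
  exact Finsupp.mapDomain_injective this

end HomogY

open HomogY

/-- Section 5: if `sCl(μ, B)` has full dimension (condition (★)), then the image of the
central degree-two generator `y` is a regular element of the homogenization `A`,
i.e. neither a left nor a right zero divisor. -/
theorem homogenization_y_regular
    (𝕜 : Type*) [Field 𝕜] (hchar : (2 : 𝕜) ≠ 0) (n : ℕ) (hn : 1 ≤ n)
    (μ B : Fin n → Fin n → 𝕜) (hμ : MulAntisym μ) (hB : MuSymm μ B)
    (hstar : StarCond μ B) :
    (∀ a : RingQuot (HomogRel 𝕜 n μ B),
        RingQuot.mkAlgHom 𝕜 (HomogRel 𝕜 n μ B) (ι 𝕜 (Sum.inr ())) * a = 0 → a = 0) ∧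
    (∀ a : RingQuot (HomogRel 𝕜 n μ B),
        a * RingQuot.mkAlgHom 𝕜 (HomogRel 𝕜 n μ B) (ι 𝕜 (Sum.inr ())) = 0 → a = 0) := by
  classical
  have hone : Ψ μ B (bas (∅ : Finset (Fin n)) 0) = 1 := by
    rw [Ψ_bas, Finset.sort_empty]
    simp [ΨL]
  have key : ∀ f : FreeAlgebra 𝕜 (Fin n ⊕ Unit),
      rho0 μ B f (bas ∅ 0) = 0 →
      RingQuot.mkAlgHom 𝕜 (HomogRel 𝕜 n μ B) f = 0 := by
    intro f h0
    have h1 := Psi_rho0 μ B hchar hμ f (bas ∅ 0)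
    rw [h0, map_zero, hone, mul_one] at h1
    exact h1.symm
  constructor
  · intro a ha
    obtain ⟨f, rfl⟩ := RingQuot.mkAlgHom_surjective 𝕜 (HomogRel 𝕜 n μ B) a
    apply key f
    have h3 := congrArg (rho μ B hμ hB hstar) ha
    rw [map_mul, map_zero, rho_mk, rho_mk, rho0_inr] at h3
    have h4 := LinearMap.congr_fun h3 (bas (∅ : Finset (Fin n)) 0)
    rw [Module.End.mul_apply, LinearMap.zero_apply] at h4
    exact Yct_inj (by rw [h4, map_zero])
  · intro a ha
    obtain ⟨f, rfl⟩ := RingQuot.mkAlgHom_surjective 𝕜 (HomogRel 𝕜 n μ B) a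
    apply key f
    have h3 := congrArg (rho μ B hμ hB hstar) ha
    rw [map_mul, map_zero, rho_mk, rho_mk, rho0_inr] at h3
    have hc := (commY μ B f).symm
    rw [rho0_inr] at hc
    have h5 : rho0 μ B f (bas (∅ : Finset (Fin n)) 1) = 0 := by
      have h4 := LinearMap.congr_fun h3 (bas (∅ : Finset (Fin n)) 0)
      rw [Module.End.mul_apply, LinearMap.zero_apply] at h4
      rw [Yct_bas] at h4
      exact h4
    have h6 : Yct (rho0 μ B f (bas (∅ : Finset (Fin n)) 0)) = 0 := by
      have h7 := LinearMap.congr_fun hc.eq (bas (∅ : Finset (Fin n)) 0)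
      rw [Module.End.mul_apply, Module.End.mul_apply] at h7
      rw [← h7, Yct_bas]
      exact h5
    exact Yct_inj (by rw [h6, map_zero])
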